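/- Duality formula for the worst-case deviation term in expected ratings: let I be a finite set, x : I → {0,1}, δ : I → ℝ with δ_i ≥ 0 for all i ∈ I, and Γ a natural number. Then max over subsets S ⊆ I with |S| ≤ Γ of Σ_{i∈S} δ_i x_i equals the minimum of Γ·y + Σ_{i∈I} p_i over all y ∈ ℝ and p : I → ℝ satisfying y ≥ 0, p_i ≥ 0 and y + p_i ≥ δ_i x_i for all i ∈ I, and this minimum is attained. -/

import Mathlib

open Finset

/-- There is a set of `Γ` "largest" elements for `c`. -/
lemma aux_exists_top {I : Type*} [Fintype I] [DecidableEq I] (c : I → ℝ) :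
    ∀ Γ : ℕ, Γ ≤ Fintype.card I → ∃ T : Finset I, T.card = Γ ∧
      ∀ i ∈ T, ∀ j ∉ T, c j ≤ c i := by
  intro Γ
  induction Γ with
  | zero => intro _; exact ⟨∅, rfl, by simp⟩
  | succ n ih =>
    intro h
    obtain ⟨T, hcard, hT⟩ := ih (Nat.le_of_succ_le h)
    have hne : (Tᶜ : Finset I).Nonempty := by
      rw [← Finset.card_pos, Finset.card_compl, hcard]
      omega
    obtain ⟨j, hjmem, hj⟩ := Finset.exists_max_image Tᶜ c hne
    have hjT : j ∉ T := by simpa using hjmem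
    refine ⟨insert j T, by rw [Finset.card_insert_of_notMem hjT, hcard], ?_⟩
    intro i hi k hk
    have hkT : k ∉ T := fun h' => hk (Finset.mem_insert_of_mem h')
    rcases Finset.mem_insert.mp hi with rfl | hi
    · exact hj k (by simpa using hkT)
    · exact hT i hi k hkT

/-- Weak duality. -/
lemma aux_weak {I : Type*} [Fintype I] (c : I → ℝ) (hc : ∀ i, 0 ≤ c i)
    (Γ : ℕ) (S : Finset I) (hS : S.card ≤ Γ) (y : ℝ) (p : I → ℝ)
    (hy : 0 ≤ y) (hp : ∀ i, 0 ≤ p i) (hfeas : ∀ i, c i ≤ y + p i) :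
    ∑ i ∈ S, c i ≤ (Γ : ℝ) * y + ∑ i, p i := by
  calc ∑ i ∈ S, c i ≤ ∑ i ∈ S, (y + p i) :=
        Finset.sum_le_sum fun i _ => hfeas i
    _ = S.card * y + ∑ i ∈ S, p i := by
        rw [Finset.sum_add_distrib, Finset.sum_const, nsmul_eq_mul]
    _ ≤ (Γ : ℝ) * y + ∑ i, p i := by
        apply add_le_add
        · exact mul_le_mul_of_nonneg_right (by exact_mod_cast hS) hy
        · exact Finset.sum_le_sum_of_subset_of_nonneg (Finset.subset_univ S)
            (fun i _ _ => hp i)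

theorem duality_worst_case_deviation_expectation
    {I : Type*} [Fintype I] (x : I → ℝ) (hx : ∀ i, x i = 0 ∨ x i = 1)
    (δ : I → ℝ) (hδ : ∀ i, 0 ≤ δ i) (Γ : ℕ) :
    ∃ v : ℝ,
      IsGreatest {v : ℝ | ∃ S : Finset I, S.card ≤ Γ ∧ v = ∑ i ∈ S, δ i * x i} v ∧
      IsLeast {v : ℝ | ∃ (y : ℝ) (p : I → ℝ), 0 ≤ y ∧ (∀ i, 0 ≤ p i) ∧
          (∀ i, δ i * x i ≤ y + p i) ∧ v = (Γ : ℝ) * y + ∑ i, p i} v := by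
  classical
  set c : I → ℝ := fun i => δ i * x i with hcdef
  have hc : ∀ i, 0 ≤ c i := fun i =>
    mul_nonneg (hδ i) (by rcases hx i with h | h <;> simp [h])
  -- weak duality as lower-bound statement
  have weak : ∀ S : Finset I, S.card ≤ Γ →
      ∀ w ∈ {v : ℝ | ∃ (y : ℝ) (p : I → ℝ), 0 ≤ y ∧ (∀ i, 0 ≤ p i) ∧
          (∀ i, c i ≤ y + p i) ∧ v = (Γ : ℝ) * y + ∑ i, p i},
      ∑ i ∈ S, c i ≤ w := by
    rintro S hS w ⟨y, p, hy, hp, hfeas, rfl⟩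
    exact aux_weak c hc Γ S hS y p hy hp hfeas
  by_cases hΓ : Γ ≤ Fintype.card I
  · rcases Nat.eq_zero_or_pos Γ with rfl | hΓpos
    · -- Γ = 0 : optimum is 0
      refine ⟨0, ⟨⟨∅, by simp⟩, ?_⟩, ⟨∑ i, c i, 0, Finset.sum_nonneg fun i _ => hc i,
          fun i => le_refl _, fun i => by
            simpa using Finset.single_le_sum (fun j _ => hc j) (Finset.mem_univ i),
          by simp⟩, ?_⟩
      · rintro w ⟨S, hS, rfl⟩
        have : S = ∅ := Finset.card_eq_zero.mp (Nat.le_zero.mp hS)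
        simp [this]
      · rintro w ⟨y, p, hy, hp, hfeas, rfl⟩
        have := Finset.sum_nonneg (fun i (_ : i ∈ (Finset.univ : Finset I)) => hp i)
        simpa using this
    · -- 1 ≤ Γ ≤ card I
      obtain ⟨T, hTcard, hT⟩ := aux_exists_top c Γ hΓ
      have hTne : T.Nonempty := Finset.card_pos.mp (hTcard ▸ hΓpos)
      set y : ℝ := T.inf' hTne c with hydef
      have hy0 : 0 ≤ y := le_inf' _ _ fun i _ => hc i
      have hyT : ∀ i ∈ T, y ≤ c i := fun i hi => Finset.inf'_le c hi
      have hyout : ∀ j ∉ T, c j ≤ y := by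
        intro j hj
        obtain ⟨i, hi, hiy⟩ := Finset.exists_mem_eq_inf' hTne c
        rw [hydef, hiy]
        exact hT i hi j hj
      set p : I → ℝ := fun i => max (c i - y) 0 with hpdef
      have hp0 : ∀ i, 0 ≤ p i := fun i => le_max_right _ _
      have hfeas : ∀ i, c i ≤ y + p i := fun i => by
        have : c i - y ≤ p i := le_max_left _ _
        linarith
      have hsump : ∑ i, p i = ∑ i ∈ T, (c i - y) := by
        rw [← Finset.sum_subset (Finset.subset_univ T)
          (fun i _ hi => by simp [hpdef, sub_nonpos.mpr (hyout i hi)])]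
        exact Finset.sum_congr rfl fun i hi => by
          simp [hpdef, max_eq_left (sub_nonneg.mpr (hyT i hi))]
      have hdualval : (Γ : ℝ) * y + ∑ i, p i = ∑ i ∈ T, c i := by
        rw [hsump, Finset.sum_sub_distrib, Finset.sum_const, hTcard, nsmul_eq_mul]
        ring
      refine ⟨∑ i ∈ T, c i, ⟨⟨T, hTcard.le, rfl⟩, ?_⟩,
        ⟨y, p, hy0, hp0, hfeas, hdualval.symm⟩, ?_⟩
      · -- upper bound for primal
        rintro w ⟨S, hS, rfl⟩
        have h1 : ∑ i ∈ S \ T, c i ≤ (S \ T).card * y :=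
          calc ∑ i ∈ S \ T, c i ≤ ∑ _i ∈ S \ T, y :=
                Finset.sum_le_sum fun i hi =>
                  hyout i (Finset.mem_sdiff.mp hi).2
            _ = (S \ T).card * y := by rw [Finset.sum_const, nsmul_eq_mul]
        have h2 : ((T \ S).card : ℝ) * y ≤ ∑ i ∈ T \ S, c i :=
          calc ((T \ S).card : ℝ) * y = ∑ _i ∈ T \ S, y := by
                rw [Finset.sum_const, nsmul_eq_mul]
            _ ≤ ∑ i ∈ T \ S, c i :=
                Finset.sum_le_sum fun i hi => hyT i (Finset.mem_sdiff.mp hi).1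
        have hcards : (S \ T).card ≤ (T \ S).card := by
          have h1' : (S \ T).card + (S ∩ T).card = S.card :=
            Finset.card_sdiff_add_card_inter S T
          have h2' : (T \ S).card + (T ∩ S).card = T.card :=
            Finset.card_sdiff_add_card_inter T S
          rw [Finset.inter_comm] at h2'
          omega
        have h3 : ((S \ T).card : ℝ) * y ≤ ((T \ S).card : ℝ) * y := by
          apply mul_le_mul_of_nonneg_right _ hy0
          exact_mod_cast hcards
        have hsplitS : ∑ i ∈ S, c i = ∑ i ∈ S \ T, c i + ∑ i ∈ S ∩ T, c i := by
          rw [← Finset.sum_union (Finset.disjoint_sdiff_inter S T),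
            Finset.sdiff_union_inter]
        have hsplitT : ∑ i ∈ T, c i = ∑ i ∈ T \ S, c i + ∑ i ∈ T ∩ S, c i := by
          rw [← Finset.sum_union (Finset.disjoint_sdiff_inter T S),
            Finset.sdiff_union_inter]
        rw [Finset.inter_comm] at hsplitT
        linarith
      · rintro w hw
        exact weak T hTcard.le w hw
  · -- Γ > card I : optimum is ∑ over univ
    push_neg at hΓ
    refine ⟨∑ i, c i, ⟨⟨Finset.univ, ?_, rfl⟩, ?_⟩,
      ⟨0, c, le_refl _, hc, fun i => by simp [hcdef], by simp⟩, ?_⟩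
    · simpa using hΓ.le
    · rintro w ⟨S, hS, rfl⟩
      exact Finset.sum_le_sum_of_subset_of_nonneg (Finset.subset_univ S)
        (fun i _ _ => hc i)
    · rintro w hw
      exact weak Finset.univ (by simpa using hΓ.le) w hw
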